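/- Let n ≥ 2 be an integer, γ ∈ (0,1), and set p_{n,γ} = ( ∫_{ℝⁿ} (1 + |x|²)^{−(n+2γ)/2} dx )^{−1}. Then for every y > 0 and every x ∈ ℝⁿ, ∫_{ℝⁿ} p_{n,γ} · y^{2γ} (y² + |x−ξ|²)^{−(n+2γ)/2} · |ξ|^{2γ−n} dξ = (y² + |x|²)^{(2γ−n)/2} (the integral being absolutely convergent). -/

import Mathlib

open Real MeasureTheory


open Set EuclideanGeometry
/-- The normalizing constant `p_{n,γ}` of the Caffarelli–Silvestre Poisson kernel. -/
noncomputable def poissonConst (n : ℕ) (γ : ℝ) : ℝ :=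
  (∫ x : EuclideanSpace ℝ (Fin n), (1 + ‖x‖ ^ 2) ^ (-((n:ℝ) + 2*γ)/2))⁻¹

namespace PoissonAux


variable {n : ℕ} {γ : ℝ}

local notation "E" => EuclideanSpace ℝ (Fin n)

lemma base_integrable (hγ : 0 < γ) :
    Integrable (fun x : E => (1 + ‖x‖ ^ 2) ^ (-((n:ℝ) + 2*γ)/2)) := by
  have h : ((Module.finrank ℝ E : ℝ)) < (n:ℝ) + 2*γ := by
    simp only [finrank_euclideanSpace_fin]; linarith
  exact integrable_rpow_neg_one_add_norm_sq h

lemma base_pos (hn : 1 ≤ n) (hγ : 0 < γ) :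
    0 < ∫ x : E, (1 + ‖x‖ ^ 2) ^ (-((n:ℝ) + 2*γ)/2) := by
  rw [integral_pos_iff_support_of_nonneg_ae
    (Filter.Eventually.of_forall fun x => by positivity) (base_integrable hγ)]
  have : Function.support (fun x : E => (1 + ‖x‖ ^ 2) ^ (-((n:ℝ) + 2*γ)/2)) = univ := by
    ext x; simp only [Function.mem_support, mem_univ, iff_true]
    positivity
  rw [this]
  exact isOpen_univ.measure_pos _ univ_nonempty





lemma normalization (hγ : 0 < γ) {y : ℝ} (hy : 0 < y) (x : E) :
    Integrable (fun ξ : E => (y ^ 2 + ‖x - ξ‖ ^ 2) ^ (-((n:ℝ) + 2*γ)/2)) ∧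
    ∫ ξ : E, (y ^ 2 + ‖x - ξ‖ ^ 2) ^ (-((n:ℝ) + 2*γ)/2)
      = y ^ (-(2*γ)) * ∫ u : E, (1 + ‖u‖ ^ 2) ^ (-((n:ℝ) + 2*γ)/2) := by
  set p : ℝ := -((n:ℝ) + 2*γ)/2 with hp
  have key : ∀ ξ : E, (y ^ 2 + ‖ξ‖ ^ 2) ^ p = (y ^ 2) ^ p * (1 + ‖y⁻¹ • ξ‖ ^ 2) ^ p := by
    intro ξ
    rw [← mul_rpow (by positivity) (by positivity)]
    congr 1
    rw [norm_smul, norm_inv, Real.norm_eq_abs, abs_of_pos hy]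
    field_simp
  constructor
  · have h1 : Integrable (fun ξ : E => (1 + ‖y⁻¹ • ξ‖ ^ 2) ^ p) := by
      rw [integrable_comp_smul_iff volume
        (fun u : E => (1 + ‖u‖ ^ 2) ^ p) (inv_ne_zero hy.ne')]
      exact base_integrable hγ
    have h2 : Integrable (fun ξ : E => (y ^ 2 + ‖ξ‖ ^ 2) ^ p) := by
      have := (h1.const_mul ((y ^ 2) ^ p))
      exact this.congr (Filter.Eventually.of_forall fun ξ => (key ξ).symm)
    exact ((Measure.measurePreserving_sub_left volume x).integrable_comp h2.aestronglyMeasurable).2 h2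
  · calc ∫ ξ : E, (y ^ 2 + ‖x - ξ‖ ^ 2) ^ p
        = ∫ ξ : E, (y ^ 2 + ‖ξ‖ ^ 2) ^ p :=
          integral_sub_left_eq_self (fun u : E => (y ^ 2 + ‖u‖ ^ 2) ^ p) volume x
      _ = ∫ ξ : E, (y ^ 2) ^ p * (1 + ‖y⁻¹ • ξ‖ ^ 2) ^ p := by simp_rw [key]
      _ = (y ^ 2) ^ p * ∫ ξ : E, (1 + ‖y⁻¹ • ξ‖ ^ 2) ^ p := integral_const_mul _ _
      _ = (y ^ 2) ^ p * (|y ^ Module.finrank ℝ E| •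
            ∫ u : E, (1 + ‖u‖ ^ 2) ^ p) :=
          by rw [Measure.integral_comp_inv_smul volume (fun u : E => (1 + ‖u‖ ^ 2) ^ p) y]
      _ = y ^ (-(2*γ)) * ∫ u : E, (1 + ‖u‖ ^ 2) ^ p := by
          rw [finrank_euclideanSpace_fin, smul_eq_mul, ← mul_assoc]
          congr 1
          rw [abs_of_pos (pow_pos hy n), ← Real.rpow_natCast y 2, ← Real.rpow_natCast y n,
            ← Real.rpow_mul hy.le, ← Real.rpow_add hy]
          congr 1
          rw [hp]; push_cast; ring




lemma inv_apply (ξ : E) : inversion (0:E) 1 ξ = (‖ξ‖^2)⁻¹ • ξ := by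
  simp [inversion_def, dist_zero_right, one_div]

lemma det_f' {ξ : E} (hξ : ξ ≠ (0:E)) :
    |((((1:ℝ) / dist ξ 0) ^ 2 • (Submodule.reflection (ℝ ∙ (ξ - 0))ᗮ : E →L[ℝ] E)).det)|
      = ‖ξ‖ ^ (-(2*(n:ℝ))) := by
  have hξn : (0:ℝ) < ‖ξ‖ := norm_pos_iff.2 hξ
  rw [sub_zero, dist_zero_right]
  set K := (ℝ ∙ ξ)ᗮ with hK
  have hco : (((Submodule.reflection K : E →L[ℝ] E)) : E →ₗ[ℝ] E) = (Submodule.reflection K).toLinearMap := rfl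
  have h1 : (((1:ℝ)/‖ξ‖)^2 • (Submodule.reflection K : E →L[ℝ] E)).det
      = (((1:ℝ)/‖ξ‖)^2)^(Module.finrank ℝ E) * LinearMap.det (Submodule.reflection K).toLinearMap := by
    rw [ContinuousLinearMap.det, ContinuousLinearMap.coe_smul, LinearMap.det_smul, hco]
  have h2 : LinearMap.det (Submodule.reflection K).toLinearMap = (-1) ^ Module.finrank ℝ Kᗮ :=
    Submodule.det_reflection K
  have h3 : Kᗮ = ℝ ∙ ξ := Submodule.orthogonal_orthogonal _
  rw [h1, h2, h3, finrank_span_singleton hξ, pow_one, mul_neg_one, abs_neg,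
    finrank_euclideanSpace_fin, abs_of_pos (by positivity)]
  rw [← rpow_natCast ((1/‖ξ‖)^2) n, ← rpow_natCast (1/‖ξ‖) 2, ← rpow_mul (by positivity),
    one_div, inv_rpow hξn.le, ← rpow_neg hξn.le]
  norm_num


open scoped RealInnerProductSpace

lemma norm_aux {y : ℝ} (hy : 0 < y) (x : E) {ξ : E} (hξ : ξ ≠ (0:E)) :
    y^2 + ‖x - (‖ξ‖^2)⁻¹ • ξ‖^2
      = ((y^2 + ‖x‖^2) / ‖ξ‖^2) *
        ((y/(y^2+‖x‖^2))^2 + ‖(y^2+‖x‖^2)⁻¹ • x - ξ‖^2) := by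
  have ht : (0:ℝ) < ‖ξ‖ := norm_pos_iff.2 hξ
  have hm : (0:ℝ) < y^2+‖x‖^2 := by positivity
  have e1 : ‖x - (‖ξ‖^2)⁻¹ • ξ‖^2
      = ‖x‖^2 - 2*((‖ξ‖^2)⁻¹ * ⟪x,ξ⟫) + ((‖ξ‖^2)⁻¹)^2*‖ξ‖^2 := by
    rw [norm_sub_sq_real, real_inner_smul_right, norm_smul]
    rw [Real.norm_eq_abs, abs_of_pos (by positivity), mul_pow]
  have e2 : ‖(y^2+‖x‖^2)⁻¹ • x - ξ‖^2
      = ((y^2+‖x‖^2)⁻¹)^2*‖x‖^2 - 2*((y^2+‖x‖^2)⁻¹ * ⟪x,ξ⟫) + ‖ξ‖^2 := by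
    rw [norm_sub_sq_real, real_inner_smul_left, norm_smul]
    rw [Real.norm_eq_abs, abs_of_pos (by positivity), mul_pow]
  rw [e1, e2]
  field_simp
  ring

lemma pointwise (hγ : 0 < γ) {y : ℝ} (hy : 0 < y) (x : E) {ξ : E} (hξ : ξ ≠ (0:E)) :
    ‖ξ‖ ^ (-(2*(n:ℝ))) *
      ((y^2 + ‖x - inversion (0:E) 1 ξ‖^2) ^ (-((n:ℝ)+2*γ)/2)
        * ‖inversion (0:E) 1 ξ‖ ^ (2*γ-(n:ℝ)))
    = (y^2+‖x‖^2) ^ (-((n:ℝ)+2*γ)/2) *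
      ((y/(y^2+‖x‖^2))^2 + ‖(y^2+‖x‖^2)⁻¹ • x - ξ‖^2) ^ (-((n:ℝ)+2*γ)/2) := by
  have ht : (0:ℝ) < ‖ξ‖ := norm_pos_iff.2 hξ
  have hm : (0:ℝ) < y^2+‖x‖^2 := by positivity
  set p : ℝ := -((n:ℝ)+2*γ)/2 with hp
  set A : ℝ := (y/(y^2+‖x‖^2))^2 + ‖(y^2+‖x‖^2)⁻¹ • x - ξ‖^2 with hA
  have hA0 : (0:ℝ) ≤ A := by positivity
  have h1 : ‖inversion (0:E) 1 ξ‖ = ‖ξ‖⁻¹ := by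
    rw [inv_apply, norm_smul, Real.norm_eq_abs, abs_of_pos (by positivity), sq]
    field_simp
  rw [h1, inv_apply, norm_aux hy x hξ]
  rw [mul_rpow (le_of_lt (div_pos hm (by positivity))) hA0,
    div_rpow hm.le (by positivity)]
  rw [inv_rpow ht.le, ← rpow_neg ht.le]
  rw [← rpow_natCast ‖ξ‖ 2, ← rpow_mul ht.le]
  have hcomb : ‖ξ‖ ^ (-(2*(n:ℝ))) * (‖ξ‖ ^ ((2:ℝ)*p))⁻¹ * ‖ξ‖ ^ (-(2*γ-(n:ℝ))) = 1 := by
    rw [← rpow_neg ht.le, ← rpow_add ht, ← rpow_add ht]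
    have : -(2*(n:ℝ)) + -((2:ℝ)*p) + -(2*γ-(n:ℝ)) = 0 := by rw [hp]; ring
    rw [this, rpow_zero]
  calc ‖ξ‖ ^ (-(2*(n:ℝ))) *
        ((y^2+‖x‖^2) ^ p / ‖ξ‖ ^ ((2:ℝ)*p) * A ^ p * ‖ξ‖ ^ (-(2*γ-(n:ℝ))))
      = ((y^2+‖x‖^2) ^ p * A ^ p) *
        (‖ξ‖ ^ (-(2*(n:ℝ))) * (‖ξ‖ ^ ((2:ℝ)*p))⁻¹ * ‖ξ‖ ^ (-(2*γ-(n:ℝ)))) := by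
        rw [div_eq_mul_inv]; ring
    _ = (y^2+‖x‖^2) ^ p * A ^ p := by rw [hcomb, mul_one]

lemma key (hn : 1 ≤ n) (hγ : 0 < γ) {y : ℝ} (hy : 0 < y) (x : E) :
    Integrable (fun ξ : E => (y^2+‖x-ξ‖^2)^(-((n:ℝ)+2*γ)/2) * ‖ξ‖^(2*γ-(n:ℝ))) ∧
    ∫ ξ : E, (y^2+‖x-ξ‖^2)^(-((n:ℝ)+2*γ)/2) * ‖ξ‖^(2*γ-(n:ℝ))
      = (y^2+‖x‖^2)^(-((n:ℝ)+2*γ)/2) *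
        ∫ ξ : E, ((y/(y^2+‖x‖^2))^2 + ‖(y^2+‖x‖^2)⁻¹ • x - ξ‖^2)^(-((n:ℝ)+2*γ)/2) := by
  haveI : Nontrivial (EuclideanSpace ℝ (Fin n)) :=
    Module.nontrivial_of_finrank_pos (R := ℝ)
      (by rw [finrank_euclideanSpace_fin]; omega)
  have hm : (0:ℝ) < y^2+‖x‖^2 := by positivity
  set p : ℝ := -((n:ℝ)+2*γ)/2 with hp
  set s : Set E := {(0:E)}ᶜ with hsdef
  have hs : MeasurableSet s := (measurableSet_singleton _).compl
  have hres : volume.restrict s = volume :=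
    Measure.restrict_eq_self_of_ae_mem (by
      refine mem_ae_iff.2 ?_
      simp [hsdef])
  set φ : E → E := fun ξ => inversion (0:E) 1 ξ with hφ
  set f' : E → (E →L[ℝ] E) :=
    fun ξ => ((1:ℝ)/dist ξ 0)^2 • (Submodule.reflection (ℝ ∙ (ξ-0))ᗮ : E →L[ℝ] E) with hf'def
  have hf' : ∀ ξ ∈ s, HasFDerivWithinAt φ (f' ξ) s ξ := fun ξ hξ =>
    (hasFDerivAt_inversion (by simpa [hsdef] using hξ)).hasFDerivWithinAt
  have hinj : InjOn φ s := (inversion_injective (0:E) one_ne_zero).injOn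
  have hne : ∀ ξ : E, ξ ≠ 0 → φ ξ ≠ 0 := fun ξ hξ h =>
    hξ ((inversion_eq_center one_ne_zero).1 h)
  have himg : φ '' s = s := by
    apply Subset.antisymm
    · rintro _ ⟨ξ, hξ, rfl⟩
      exact hne ξ hξ
    · intro ξ hξ
      exact ⟨φ ξ, hne ξ hξ, inversion_inversion (0:E) one_ne_zero ξ⟩
  set g : E → ℝ := fun ξ => (y^2+‖x-ξ‖^2)^p * ‖ξ‖^(2*γ-(n:ℝ)) with hg
  set h : E → ℝ :=
    fun ξ => ((y/(y^2+‖x‖^2))^2 + ‖(y^2+‖x‖^2)⁻¹ • x - ξ‖^2)^p with hh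
  have heq : ∀ ξ ∈ s, |(f' ξ).det| • g (φ ξ) = (y^2+‖x‖^2)^p * h ξ := by
    intro ξ hξ
    have hξ0 : ξ ≠ (0:E) := hξ
    rw [hf'def, smul_eq_mul, det_f' hξ0, hg, hh, hφ]
    exact pointwise hγ hy x hξ0
  have hint_base := normalization (n := n) hγ (div_pos hy hm) ((y^2+‖x‖^2)⁻¹ • x)
  have hinth : Integrable (fun ξ : E => (y^2+‖x‖^2)^p * h ξ) := hint_base.1.const_mul _
  have hiff := integrableOn_image_iff_integrableOn_abs_det_fderiv_smul volume hs hf' hinj g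
  rw [himg] at hiff
  have hOn : IntegrableOn (fun ξ => |(f' ξ).det| • g (φ ξ)) s :=
    (hinth.integrableOn).congr_fun (fun ξ hξ => (heq ξ hξ).symm) hs
  have hgOn : IntegrableOn g s := hiff.2 hOn
  have hgInt : Integrable g := by rwa [IntegrableOn, hres] at hgOn
  refine ⟨hgInt, ?_⟩
  calc ∫ ξ, g ξ = ∫ ξ in s, g ξ := by rw [hres]
    _ = ∫ ξ in φ '' s, g ξ := by rw [himg]
    _ = ∫ ξ in s, |(f' ξ).det| • g (φ ξ) :=
        integral_image_eq_integral_abs_det_fderiv_smul volume hs hf' hinj g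
    _ = ∫ ξ in s, (y^2+‖x‖^2)^p * h ξ := setIntegral_congr_fun hs heq
    _ = ∫ ξ, (y^2+‖x‖^2)^p * h ξ := by rw [hres]
    _ = (y^2+‖x‖^2)^p * ∫ ξ, h ξ := integral_const_mul _ _


end PoissonAux

/-- Convolving the Poisson kernel with the Green's function `|ξ|^(2γ-n)` of the fractional
Laplacian yields `(y² + |x|²)^((2γ-n)/2)`: the flat-model instance of `Γ_g = K_g * G_h`. -/
theorem poisson_convolution_green (n : ℕ) (hn : 2 ≤ n) (γ : ℝ) (hγ : γ ∈ Set.Ioo (0:ℝ) 1)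
    (y : ℝ) (hy : 0 < y) (x : EuclideanSpace ℝ (Fin n)) :
    Integrable (fun ξ : EuclideanSpace ℝ (Fin n) =>
        poissonConst n γ * y ^ (2*γ) * (y ^ 2 + ‖x - ξ‖ ^ 2) ^ (-((n:ℝ) + 2*γ)/2)
          * ‖ξ‖ ^ (2*γ - (n:ℝ)))
    ∧ (∫ ξ : EuclideanSpace ℝ (Fin n),
          poissonConst n γ * y ^ (2*γ) * (y ^ 2 + ‖x - ξ‖ ^ 2) ^ (-((n:ℝ) + 2*γ)/2)
            * ‖ξ‖ ^ (2*γ - (n:ℝ)))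
        = (y ^ 2 + ‖x‖ ^ 2) ^ ((2*γ - (n:ℝ))/2) := by
  obtain ⟨hγ0, -⟩ := hγ
  have hn1 : 1 ≤ n := by omega
  have hm : (0:ℝ) < y^2+‖x‖^2 := by positivity
  have hIpos : 0 < ∫ u : EuclideanSpace ℝ (Fin n), (1 + ‖u‖ ^ 2) ^ (-((n:ℝ) + 2*γ)/2) :=
    PoissonAux.base_pos hn1 hγ0
  have hkey := PoissonAux.key hn1 hγ0 hy x
  have hnorm := PoissonAux.normalization hγ0 (div_pos hy hm) ((y^2+‖x‖^2)⁻¹ • x)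
  have hc : poissonConst n γ *
      (∫ u : EuclideanSpace ℝ (Fin n), (1 + ‖u‖ ^ 2) ^ (-((n:ℝ) + 2*γ)/2)) = 1 := by
    rw [poissonConst]
    exact inv_mul_cancel₀ hIpos.ne'
  constructor
  · have := hkey.1.const_mul (poissonConst n γ * y ^ (2*γ))
    exact this.congr (Filter.Eventually.of_forall fun ξ => by ring)
  · have h1 : (y/(y^2+‖x‖^2))^(-(2*γ)) = y^(-(2*γ)) * ((y^2+‖x‖^2)^(2*γ)) := by
      rw [div_rpow hy.le hm.le, rpow_neg hm.le, div_inv_eq_mul]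
    have h2 : y^(2*γ) * y^(-(2*γ)) = 1 := by
      rw [← rpow_add hy]; simp
    have h3 : (y^2+‖x‖^2)^(-((n:ℝ)+2*γ)/2) * (y^2+‖x‖^2)^(2*γ)
        = (y^2+‖x‖^2)^((2*γ-(n:ℝ))/2) := by
      rw [← rpow_add hm]; congr 1; ring
    calc ∫ ξ : EuclideanSpace ℝ (Fin n),
          poissonConst n γ * y ^ (2*γ) * (y ^ 2 + ‖x - ξ‖ ^ 2) ^ (-((n:ℝ) + 2*γ)/2)
            * ‖ξ‖ ^ (2*γ - (n:ℝ))
        = ∫ ξ : EuclideanSpace ℝ (Fin n),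
            (poissonConst n γ * y ^ (2*γ)) *
              ((y ^ 2 + ‖x - ξ‖ ^ 2) ^ (-((n:ℝ) + 2*γ)/2) * ‖ξ‖ ^ (2*γ - (n:ℝ))) := by
          congr 1; funext ξ; ring
      _ = (poissonConst n γ * y ^ (2*γ)) *
            ∫ ξ : EuclideanSpace ℝ (Fin n),
              (y ^ 2 + ‖x - ξ‖ ^ 2) ^ (-((n:ℝ) + 2*γ)/2) * ‖ξ‖ ^ (2*γ - (n:ℝ)) :=
          integral_const_mul _ _
      _ = (poissonConst n γ * y ^ (2*γ)) *
            ((y^2+‖x‖^2)^(-((n:ℝ)+2*γ)/2) *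
              ((y/(y^2+‖x‖^2))^(-(2*γ)) *
                ∫ u : EuclideanSpace ℝ (Fin n), (1 + ‖u‖ ^ 2) ^ (-((n:ℝ) + 2*γ)/2))) := by
          rw [hkey.2, hnorm.2]
      _ = (poissonConst n γ *
            (∫ u : EuclideanSpace ℝ (Fin n), (1 + ‖u‖ ^ 2) ^ (-((n:ℝ) + 2*γ)/2))) *
            (y^(2*γ) * y^(-(2*γ))) *
            ((y^2+‖x‖^2)^(-((n:ℝ)+2*γ)/2) * (y^2+‖x‖^2)^(2*γ)) := by
          rw [h1]; ring
      _ = (y ^ 2 + ‖x‖ ^ 2) ^ ((2*γ - (n:ℝ))/2) := by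
          rw [hc, h2, h3, one_mul, one_mul]
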